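/- arXiv:1403.0241 — 3 statements merged into one kernel-verified Lean document; each statement's English description precedes it below -/
import Mathlib

section
/- Gordan's theorem of alternatives: For every real n×m matrix A, exactly one of the following holds: (a) there exists a nonzero vector z in the nonnegative orthant of R^m with Az = 0, or (b) there exists y in R^n such that every entry of A^T y is strictly positive. -/
open Matrix

/-- Gordan's theorem of alternatives. -/
theorem gordan_alternative (n m : ℕ) (A : Matrix (Fin n) (Fin m) ℝ) :
    Xor'
      (∃ z : Fin m → ℝ, z ≠ 0 ∧ (∀ i, 0 ≤ z i) ∧ A.mulVec z = 0)
      (∃ y : Fin n → ℝ, ∀ j, 0 < Aᵀ.mulVec y j) := by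
  set col : Fin m → (Fin n → ℝ) := fun j => Aᵀ j with hcol
  have key : ∀ (y : Fin n → ℝ) (z : Fin m → ℝ),
      y ⬝ᵥ A.mulVec z = ∑ j, z j * Aᵀ.mulVec y j := by
    intro y z
    rw [Matrix.dotProduct_mulVec, ← Matrix.mulVec_transpose]
    simp [dotProduct, mul_comm]
  rcases Classical.em ((0 : Fin n → ℝ) ∈ convexHull ℝ (Set.range col)) with hmem | hmem
  · -- case (a) holds; show (b) fails
    rw [convexHull_range_eq_exists_affineCombination] at hmem
    obtain ⟨s, w, hw0, hw1, hwc⟩ := hmem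
    rw [Finset.affineCombination_eq_linear_combination s col w hw1] at hwc
    set z : Fin m → ℝ := fun j => if j ∈ s then w j else 0 with hz
    have hz0 : ∀ j, 0 ≤ z j := by
      intro j; simp only [hz]; split
      · exact hw0 _ ‹_›
      · exact le_rfl
    have hzsum : ∑ j, z j = 1 := by
      rw [hz, Finset.sum_ite_mem, Finset.univ_inter, hw1]
    have hzne : z ≠ 0 := by
      intro h
      rw [h] at hzsum
      simp at hzsum
    have hAz : A.mulVec z = 0 := by
      funext i
      have : ∑ j, z j • col j = 0 := by
        rw [← hwc]
        simp only [hz, ite_smul, zero_smul, Finset.sum_ite_mem, Finset.univ_inter]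
      have := congrFun this i
      simpa [Matrix.mulVec, dotProduct, hcol, Matrix.transpose_apply,
        Finset.sum_apply, mul_comm] using this
    refine Or.inl ⟨⟨z, hzne, hz0, hAz⟩, ?_⟩
    rintro ⟨y, hy⟩
    have h0 : y ⬝ᵥ A.mulVec z = 0 := by rw [hAz]; simp
    rw [key] at h0
    have hpos : 0 < ∑ j, z j * Aᵀ.mulVec y j := by
      have hne : ∃ j, z j ≠ 0 := by
        by_contra h
        push_neg at h
        exact hzne (funext h)
      obtain ⟨j0, hj0⟩ := hne
      have hj0' : 0 < z j0 := lt_of_le_of_ne (hz0 j0) (Ne.symm hj0)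
      apply Finset.sum_pos' (fun j _ => mul_nonneg (hz0 j) (le_of_lt (hy j)))
        ⟨j0, Finset.mem_univ j0, mul_pos hj0' (hy j0)⟩
    rw [h0] at hpos
    exact lt_irrefl 0 hpos
  · -- case (b) holds; show (a) fails
    obtain ⟨f, u, hf1, hf2⟩ := geometric_hahn_banach_closed_point
      (convex_convexHull ℝ _) ((Set.finite_range col).isClosed_convexHull ℝ) hmem
    have hu : u < 0 := by simpa using hf2
    set y : Fin n → ℝ := fun i => -f (Pi.single i 1) with hy
    have hsingle : ∀ i : Fin n, (fun j => if i = j then (1:ℝ) else 0) = Pi.single i 1 := by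
      intro i; funext j; simp [Pi.single_apply, eq_comm]
    have hrep : ∀ v : Fin n → ℝ, f v = ∑ i, v i * f (Pi.single i 1) := by
      intro v
      conv_lhs => rw [pi_eq_sum_univ v]
      rw [map_sum]
      refine Finset.sum_congr rfl fun i _ => ?_
      rw [hsingle i, f.map_smul, smul_eq_mul]
    have hb : ∀ j, 0 < Aᵀ.mulVec y j := by
      intro j
      have hcj : f (col j) < u := hf1 _ (subset_convexHull ℝ _ ⟨j, rfl⟩)
      have : Aᵀ.mulVec y j = -f (col j) := by
        rw [hrep (col j)]
        simp [Matrix.mulVec, dotProduct, hy, hcol, Finset.sum_neg_distrib,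
          mul_neg]
      rw [this]
      linarith
    refine Or.inr ⟨⟨y, hb⟩, ?_⟩
    rintro ⟨z, hzne, hz0, hAz⟩
    have h0 : y ⬝ᵥ A.mulVec z = 0 := by rw [hAz]; simp
    rw [key] at h0
    have hne : ∃ j, z j ≠ 0 := by
      by_contra h; push_neg at h; exact hzne (funext h)
    obtain ⟨j0, hj0⟩ := hne
    have hpos : 0 < ∑ j, z j * Aᵀ.mulVec y j :=
      Finset.sum_pos' (fun j _ => mul_nonneg (hz0 j) (le_of_lt (hb j)))
        ⟨j0, Finset.mem_univ j0, mul_pos (lt_of_le_of_ne (hz0 j0) (Ne.symm hj0)) (hb j0)⟩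
    rw [h0] at hpos
    exact lt_irrefl 0 hpos
end

section
/- Let B ∈ R^{r×n} and K ⊆ R^n a subset. The generalized monomial map φ_B : R^n_{>0} → R^r_{>0}, φ_B(x) = x^B (with (x^B)_j = Π_i x_i^{B_{ji}}), is injective with respect to K (i.e., φ_B(x) = φ_B(y) and x - y ∈ K imply x = y) if and only if σ(ker(B)) ∩ σ(K \ {0}) = ∅. -/
open Matrix

/-- The generalized monomial map `x ↦ x^B`. -/
noncomputable def monomialMap {r n : ℕ} (B : Matrix (Fin r) (Fin n) ℝ)
    (x : Fin n → ℝ) : Fin r → ℝ :=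
  fun j => ∏ i, x i ^ B j i

lemma monomialMap_apply_pos {r n : ℕ} (B : Matrix (Fin r) (Fin n) ℝ)
    (x : Fin n → ℝ) (hx : ∀ i, 0 < x i) (j : Fin r) :
    monomialMap B x j = Real.exp (∑ i, B j i * Real.log (x i)) := by
  rw [monomialMap, Real.exp_sum]
  refine Finset.prod_congr rfl fun i _ => ?_
  rw [Real.rpow_def_of_pos (hx i)]
  ring_nf

lemma monomialMap_eq_iff {r n : ℕ} (B : Matrix (Fin r) (Fin n) ℝ)
    (x y : Fin n → ℝ) (hx : ∀ i, 0 < x i) (hy : ∀ i, 0 < y i) :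
    monomialMap B x = monomialMap B y ↔
      B.mulVec (fun i => Real.log (x i) - Real.log (y i)) = 0 := by
  rw [funext_iff, funext_iff]
  refine forall_congr' fun j => ?_
  rw [monomialMap_apply_pos B x hx j, monomialMap_apply_pos B y hy j,
    Real.exp_eq_exp]
  simp only [Matrix.mulVec, dotProduct, Pi.zero_apply, mul_sub,
    Finset.sum_sub_distrib, sub_eq_zero]

lemma sign_log_sub {x y : ℝ} (hx : 0 < x) (hy : 0 < y) :
    Real.sign (Real.log x - Real.log y) = Real.sign (x - y) := by
  rcases lt_trichotomy x y with h | h | h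
  · rw [Real.sign_of_neg (by simpa using Real.log_lt_log hx h),
      Real.sign_of_neg (by linarith)]
  · simp [h]
  · rw [Real.sign_of_pos (by simpa [sub_pos] using Real.log_lt_log hy h),
      Real.sign_of_pos (by linarith)]

/-- `φ_B` is injective with respect to `K` iff `σ(ker B) ∩ σ(K \ {0}) = ∅`. -/
theorem monomialMap_injective_iff (r n : ℕ) (B : Matrix (Fin r) (Fin n) ℝ)
    (K : Set (Fin n → ℝ)) :
    (∀ x y : Fin n → ℝ, (∀ i, 0 < x i) → (∀ i, 0 < y i) →
        monomialMap B x = monomialMap B y → x - y ∈ K → x = y) ↔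
      ¬ ∃ k : Fin n → ℝ, B.mulVec k = 0 ∧ ∃ u ∈ K, u ≠ 0 ∧
        (∀ i, Real.sign (k i) = Real.sign (u i)) := by
  constructor
  · rintro H ⟨k, hk, u, huK, hu0, hs⟩
    -- build x, y positive with x - y = u and log x - log y = k
    set y : Fin n → ℝ := fun i => if u i = 0 then 1 else u i / (Real.exp (k i) - 1) with hydef
    set x : Fin n → ℝ := fun i => y i * Real.exp (k i) with hxdef
    have hki : ∀ i, u i = 0 → k i = 0 := by
      intro i h
      have := hs i
      rw [h, Real.sign_zero, Real.sign_eq_zero_iff] at this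
      exact this
    have hy : ∀ i, 0 < y i := by
      intro i
      by_cases h : u i = 0
      · simp [hydef, h]
      · have hk0 : k i ≠ 0 := by
          intro hk0
          have := hs i
          rw [hk0, Real.sign_zero] at this
          exact h (Real.sign_eq_zero_iff.mp this.symm)
        rcases lt_or_gt_of_ne h with hneg | hpos
        · have hkneg : k i < 0 := by
            by_contra hc
            push_neg at hc
            have hkp : 0 < k i := lt_of_le_of_ne hc (Ne.symm hk0)
            have := hs i
            rw [Real.sign_of_pos hkp, Real.sign_of_neg hneg] at this
            norm_num at this
          have he : Real.exp (k i) - 1 < 0 := by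
            have := Real.exp_lt_one_iff.mpr hkneg
            linarith
          simp only [hydef, if_neg h]
          exact div_pos_of_neg_of_neg hneg he
        · have hkpos : 0 < k i := by
            by_contra hc
            push_neg at hc
            have hkn : k i < 0 := lt_of_le_of_ne hc hk0
            have := hs i
            rw [Real.sign_of_neg hkn, Real.sign_of_pos hpos] at this
            norm_num at this
          have he : 0 < Real.exp (k i) - 1 := by
            have : 1 < Real.exp (k i) := Real.one_lt_exp_iff.mpr hkpos
            linarith
          simp only [hydef, if_neg h]
          exact div_pos hpos he
    have hx : ∀ i, 0 < x i := fun i => mul_pos (hy i) (Real.exp_pos _)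
    have hsub : x - y = u := by
      funext i
      simp only [Pi.sub_apply, hxdef]
      by_cases h : u i = 0
      · rw [hki i h]
        simp [hydef, h]
      · have hk0 : k i ≠ 0 := by
          intro hk0
          have := hs i
          rw [hk0, Real.sign_zero] at this
          exact h (Real.sign_eq_zero_iff.mp this.symm)
        have he : Real.exp (k i) - 1 ≠ 0 := by
          intro hc
          apply hk0
          have h1 : Real.exp (k i) = Real.exp 0 := by rw [Real.exp_zero]; linarith
          exact Real.exp_eq_exp.mp h1
        simp only [hydef, if_neg h]
        field_simp
    have hlog : (fun i => Real.log (x i) - Real.log (y i)) = k := by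
      funext i
      simp only [hxdef]
      rw [Real.log_mul (ne_of_gt (hy i)) (ne_of_gt (Real.exp_pos _)), Real.log_exp]
      ring
    have hmono : monomialMap B x = monomialMap B y := by
      rw [monomialMap_eq_iff B x y hx hy, hlog]
      exact hk
    have := H x y hx hy hmono (hsub ▸ huK)
    apply hu0
    rw [← hsub, this, sub_self]
  · intro H x y hx hy hmono hK
    by_contra hne
    apply H
    refine ⟨fun i => Real.log (x i) - Real.log (y i),
      (monomialMap_eq_iff B x y hx hy).mp hmono, x - y, hK, sub_ne_zero_of_ne hne, ?_⟩
    intro i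
    simpa using sign_log_sub (hx i) (hy i)
end

section
/- Reformulation of Gordan's alternative for reversible reaction systems: for every matrix Â ∈ R^{n×r} and every ν ∈ R^r, exactly one of the following holds: (a) there exists nonzero ẑ ∈ R^r with sign(ẑ_i) ∈ {sign(ν_i), 0} for all i and Â ẑ = 0; (b) there exists γ ∈ R^n such that for each i, either sign((Â^T γ)_i) = −sign(ν_i) or ν_i = 0. -/
open Matrix

lemma pos_of_sign_eq_one {x : ℝ} (h : Real.sign x = 1) : 0 < x := by
  rcases lt_trichotomy x 0 with h' | h' | h'
  · rw [Real.sign_of_neg h'] at h; norm_num at h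
  · rw [h', Real.sign_zero] at h; norm_num at h
  · exact h'

lemma neg_of_sign_eq_neg_one {x : ℝ} (h : Real.sign x = -1) : x < 0 := by
  rcases lt_trichotomy x 0 with h' | h' | h'
  · exact h'
  · rw [h', Real.sign_zero] at h; norm_num at h
  · rw [Real.sign_of_pos h'] at h; norm_num at h

lemma pi_linfun_eq {n : ℕ} (f : (Fin n → ℝ) →L[ℝ] ℝ) (y : Fin n → ℝ) :
    f y = ∑ j, y j * f (Pi.single j 1) := by
  have hy : y = ∑ j, y j • (Pi.single j 1 : Fin n → ℝ) := by
    funext m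
    simp [Finset.sum_apply, Pi.single_apply, mul_ite, Finset.sum_ite_eq']
  conv_lhs => rw [hy]
  rw [map_sum]
  simp [smul_eq_mul]

/-- Gordan-type alternative for reversible reaction systems: either there is a
nonzero sign-compatible kernel vector, or a potential vector opposing the flux. -/
theorem gordan_flux_alternative (n r : ℕ) (A : Matrix (Fin n) (Fin r) ℝ)
    (ν : Fin r → ℝ) :
    Xor'
      (∃ z : Fin r → ℝ, z ≠ 0 ∧
        (∀ i, Real.sign (z i) = Real.sign (ν i) ∨ Real.sign (z i) = 0) ∧
        A.mulVec z = 0)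
      (∃ γ : Fin n → ℝ, ∀ i,
        Real.sign (Aᵀ.mulVec γ i) = -Real.sign (ν i) ∨ ν i = 0) := by
  classical
  -- Exclusivity
  have hnot : ¬ ((∃ z : Fin r → ℝ, z ≠ 0 ∧
        (∀ i, Real.sign (z i) = Real.sign (ν i) ∨ Real.sign (z i) = 0) ∧
        A.mulVec z = 0) ∧
      (∃ γ : Fin n → ℝ, ∀ i,
        Real.sign (Aᵀ.mulVec γ i) = -Real.sign (ν i) ∨ ν i = 0)) := by
    rintro ⟨⟨z, hz, hsgn, hker⟩, ⟨γ, hγ⟩⟩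
    set d : Fin r → ℝ := Aᵀ.mulVec γ with hd
    have hsum : ∑ k, d k * z k = 0 := by
      have : ∑ k, d k * z k = γ ⬝ᵥ A.mulVec z := by
        rw [Matrix.dotProduct_mulVec]
        simp [hd, Matrix.mulVec_transpose, dotProduct]
      rw [this, hker, dotProduct_zero]
    have hterm : ∀ k, z k ≠ 0 → d k * z k < 0 := by
      intro k hzk
      have hsz : Real.sign (z k) ≠ 0 := fun h => hzk (Real.sign_eq_zero_iff.mp h)
      have hszν : Real.sign (z k) = Real.sign (ν k) := by
        rcases hsgn k with h | h
        · exact h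
        · exact absurd h hsz
      have hνk : ν k ≠ 0 := by
        intro h
        rw [h, Real.sign_zero] at hszν
        exact hsz hszν
      have hdk : Real.sign (d k) = -Real.sign (ν k) := by
        rcases hγ k with h | h
        · exact h
        · exact absurd h hνk
      rcases Real.sign_apply_eq_of_ne_zero (ν k) hνk with h | h
      · -- sign ν k = -1 : z k < 0, d k > 0
        have hz' : z k < 0 := neg_of_sign_eq_neg_one (by rw [hszν, h])
        have hd' : 0 < d k := pos_of_sign_eq_one (by rw [hdk, h]; norm_num)
        exact mul_neg_of_pos_of_neg hd' hz'
      · have hz' : 0 < z k := pos_of_sign_eq_one (by rw [hszν, h])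
        have hd' : d k < 0 := neg_of_sign_eq_neg_one (by rw [hdk, h])
        exact mul_neg_of_neg_of_pos hd' hz'
    obtain ⟨k0, hk0⟩ := Function.ne_iff.mp hz
    have hlt : ∑ k, d k * z k < ∑ _k : Fin r, (0 : ℝ) := by
      refine Finset.sum_lt_sum (fun k _ => ?_) ⟨k0, Finset.mem_univ _, hterm k0 hk0⟩
      by_cases h : z k = 0
      · simp [h]
      · exact (hterm k h).le
    rw [hsum] at hlt
    simp at hlt
  -- Totality
  have htot : (∃ z : Fin r → ℝ, z ≠ 0 ∧
        (∀ i, Real.sign (z i) = Real.sign (ν i) ∨ Real.sign (z i) = 0) ∧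
        A.mulVec z = 0) ∨
      (∃ γ : Fin n → ℝ, ∀ i,
        Real.sign (Aᵀ.mulVec γ i) = -Real.sign (ν i) ∨ ν i = 0) := by
    set b : Fin r → (Fin n → ℝ) :=
      fun k => Real.sign (ν k) • (fun j => A j k) with hbdef
    set S : Set (Fin r) := {k | ν k ≠ 0} with hSdef
    by_cases h0 : (0 : Fin n → ℝ) ∈ convexHull ℝ (b '' S)
    · -- construct kernel vector
      left
      rw [convexHull_eq] at h0
      obtain ⟨ι, t, w, zz, hw0, hw1, hzs, hcm⟩ := h0
      have htne : t.Nonempty := Finset.nonempty_of_sum_ne_zero (by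
        rw [hw1]; exact one_ne_zero)
      obtain ⟨i0, hi0⟩ := htne
      obtain ⟨k0, hk0S, _⟩ := hzs i0 hi0
      have hp : ∀ i, ∃ k, i ∈ t → (ν k ≠ 0 ∧ b k = zz i) := by
        intro i
        by_cases hi : i ∈ t
        · obtain ⟨k, hkS, hbk⟩ := hzs i hi
          exact ⟨k, fun _ => ⟨hkS, hbk⟩⟩
        · exact ⟨k0, fun h => absurd h hi⟩
      choose p hp using hp
      set ζ : Fin r → ℝ :=
        fun k => Real.sign (ν k) * ∑ i ∈ t, if p i = k then w i else 0 with hζdef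
      have hζk : ∀ k, ζ k = Real.sign (ν k) * ∑ i ∈ t, if p i = k then w i else 0 :=
        fun k => rfl
      have hcm' : ∑ i ∈ t, w i • zz i = 0 := by
        rw [← Finset.centerMass_eq_of_sum_1 t zz hw1, hcm]
      refine ⟨ζ, ?_, ?_, ?_⟩
      · -- ζ ≠ 0
        intro hζ0
        have hstep : ∀ k, Real.sign (ν k) * ζ k =
            ∑ i ∈ t, if p i = k then Real.sign (ν k) ^ 2 * w i else 0 := by
          intro k
          rw [hζk k, ← mul_assoc, ← sq, Finset.mul_sum]
          exact Finset.sum_congr rfl fun i _ => by rw [mul_ite, mul_zero]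
        have h1 : ∑ k, Real.sign (ν k) * ζ k = 1 := by
          calc ∑ k, Real.sign (ν k) * ζ k
              = ∑ k, ∑ i ∈ t, if p i = k then Real.sign (ν k) ^ 2 * w i else 0 :=
                Finset.sum_congr rfl fun k _ => hstep k
            _ = ∑ i ∈ t, ∑ k, if p i = k then Real.sign (ν k) ^ 2 * w i else 0 :=
                Finset.sum_comm
            _ = ∑ i ∈ t, Real.sign (ν (p i)) ^ 2 * w i := by
                refine Finset.sum_congr rfl fun i _ => ?_
                rw [Finset.sum_ite_eq]
                simp
            _ = ∑ i ∈ t, w i := by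
                refine Finset.sum_congr rfl fun i hi => ?_
                rcases Real.sign_apply_eq_of_ne_zero (ν (p i)) (hp i hi).1 with h | h <;>
                  rw [h] <;> norm_num
            _ = 1 := hw1
        rw [hζ0] at h1
        simp at h1
      · -- sign condition
        intro k
        have hc0 : 0 ≤ ∑ i ∈ t, if p i = k then w i else 0 := by
          refine Finset.sum_nonneg fun i hi => ?_
          by_cases h : p i = k
          · simp [h, hw0 i hi]
          · simp [h]
        rcases eq_or_lt_of_le hc0 with hc | hc
        · right
          rw [hζk k, ← hc, mul_zero, Real.sign_zero]
        by_cases hνk : ν k = 0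
        · right
          rw [hζk k, hνk, Real.sign_zero, zero_mul, Real.sign_zero]
        left
        rcases Real.sign_apply_eq_of_ne_zero (ν k) hνk with h | h
        · have : ζ k < 0 := by
            rw [hζk k, h]; linarith
          rw [Real.sign_of_neg this, h]
        · have : 0 < ζ k := by
            rw [hζk k, h]; linarith
          rw [Real.sign_of_pos this, h]
      · -- kernel
        funext j
        have hzz : ∀ i ∈ t, w i * (Real.sign (ν (p i)) * A j (p i)) = w i * zz i j := by
          intro i hi
          have hb := (hp i hi).2
          have : zz i j = Real.sign (ν (p i)) * A j (p i) := by
            rw [← hb, hbdef]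
            simp [smul_eq_mul]
          rw [this]
        have : (A.mulVec ζ) j = ∑ i ∈ t, w i * zz i j := by
          calc (A.mulVec ζ) j = ∑ k : Fin r, A j k * ζ k := by
                simp [Matrix.mulVec, dotProduct]
            _ = ∑ k : Fin r, ∑ i ∈ t, if p i = k then w i * (Real.sign (ν k) * A j k) else 0 := by
                refine Finset.sum_congr rfl fun k _ => ?_
                rw [hζk k, Finset.mul_sum, Finset.mul_sum]
                refine Finset.sum_congr rfl fun i _ => ?_
                split <;> ring
            _ = ∑ i ∈ t, ∑ k : Fin r, if p i = k then w i * (Real.sign (ν k) * A j k) else 0 :=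
                Finset.sum_comm
            _ = ∑ i ∈ t, w i * (Real.sign (ν (p i)) * A j (p i)) := by
                refine Finset.sum_congr rfl fun i _ => ?_
                rw [Finset.sum_ite_eq]
                simp
            _ = ∑ i ∈ t, w i * zz i j := Finset.sum_congr rfl hzz
        rw [this]
        have hj := congrFun hcm' j
        simpa [Finset.sum_apply, smul_eq_mul] using hj
    · -- separation
      right
      have hfin : (b '' S).Finite := (Set.toFinite S).image b
      obtain ⟨f, u, hfu, hub⟩ := geometric_hahn_banach_point_closed
        (convex_convexHull ℝ (b '' S)) (hfin.isClosed_convexHull (𝕜 := ℝ)) h0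
      have hu : 0 < u := by simpa using hfu
      refine ⟨fun j => -(f (Pi.single j 1)), fun i => ?_⟩
      by_cases hνi : ν i = 0
      · exact Or.inr hνi
      left
      have hmem : b i ∈ convexHull ℝ (b '' S) :=
        subset_convexHull ℝ _ ⟨i, hνi, rfl⟩
      have hfb : 0 < f (b i) := hu.trans (hub _ hmem)
      have hfb' : f (b i) = Real.sign (ν i) * f (fun j => A j i) := by
        rw [hbdef]; rw [f.map_smul]; simp [smul_eq_mul]
      have hAt : Aᵀ.mulVec (fun j => -(f (Pi.single j 1))) i
          = -(f (fun j => A j i)) := by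
        have hlin := pi_linfun_eq f (fun j => A j i)
        simp only [Matrix.mulVec, dotProduct, Matrix.transpose_apply]
        rw [hlin, ← Finset.sum_neg_distrib]
        exact Finset.sum_congr rfl fun j _ => by ring
      rcases Real.sign_apply_eq_of_ne_zero (ν i) hνi with h | h
      · -- sign ν i = -1: f(col) < 0, so entry > 0, sign = 1
        rw [h] at hfb' ⊢
        have hcol : f (fun j => A j i) < 0 := by nlinarith [hfb]
        rw [hAt, Real.sign_of_pos (by linarith)]
        norm_num
      · rw [h] at hfb' ⊢
        have hcol : 0 < f (fun j => A j i) := by nlinarith [hfb]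
        rw [hAt, Real.sign_of_neg (by linarith)]
  rcases htot with hP | hQ
  · exact Or.inl ⟨hP, fun hQ => hnot ⟨hP, hQ⟩⟩
  · exact Or.inr ⟨hQ, fun hP => hnot ⟨hP, hQ⟩⟩
end
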